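/- arXiv:2508.00365 — 3 statements merged into one kernel-verified Lean document; each statement's English description precedes it below -/
import Mathlib

section
/- Let L > 0 be a real number and let S be a finite subset of the closed interval [0, L]. Let 0 = t₀ ≤ t₁ ≤ … ≤ t_k ≤ t_{k+1} = L be the sorted list of the elements of S together with 0 and L, and let G = max_{0 ≤ r ≤ k} (t_{r+1} − t_r) be the largest gap. Then the minimum of x + (L − y) over all pairs (x, y) ∈ [0, L] × [0, L] such that every s ∈ S satisfies s ≤ x or y ≤ s, equals L − G. -/
/-- The sorted list `0 = t₀ ≤ t₁ ≤ … ≤ t_k ≤ t_{k+1} = L` of the elements of `S`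
together with `0` and `L`. -/
noncomputable def sortedSegPoints (L : ℝ) (S : Finset ℝ) : List ℝ :=
  (insert (0 : ℝ) (insert L S)).sort (· ≤ ·)

/-- The largest gap `G = max_{0 ≤ r ≤ k} (t_{r+1} − t_r)` between consecutive elements of
the sorted list of `S ∪ {0, L}`. -/
noncomputable def largestGap (L : ℝ) (S : Finset ℝ) : ℝ :=
  (((sortedSegPoints L S).zip (sortedSegPoints L S).tail).map
    (fun p => p.2 - p.1)).foldr max 0

private lemma foldr_max_nonneg (l : List ℝ) : 0 ≤ l.foldr max 0 := by
  induction l with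
  | nil => simp
  | cons a l ih => exact le_trans ih (le_max_right _ _)

private lemma le_foldr_max (l : List ℝ) : ∀ x ∈ l, x ≤ l.foldr max 0 := by
  induction l with
  | nil => simp
  | cons a l ih =>
    intro x hx
    rcases List.mem_cons.mp hx with rfl | hx
    · exact le_max_left _ _
    · exact le_trans (ih x hx) (le_max_right _ _)

private lemma foldr_max_mem (l : List ℝ) (hne : l ≠ []) (h : ∀ x ∈ l, 0 ≤ x) :
    l.foldr max 0 ∈ l := by
  induction l with
  | nil => simp at hne
  | cons a l ih =>
    cases l with
    | nil => simp [max_eq_left (h a (by simp))]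
    | cons b l' =>
      rcases le_total a ((b :: l').foldr max 0) with hle | hle
      · have := ih (by simp) (fun x hx => h x (List.mem_cons_of_mem _ hx))
        simp only [List.foldr_cons] at *
        rw [max_eq_right hle]
        exact List.mem_cons_of_mem _ this
      · simp only [List.foldr_cons] at *
        rw [max_eq_left hle]
        exact List.mem_cons_self

private lemma mem_zip_tail {α : Type*} {l : List α} {p : α × α} (h : p ∈ l.zip l.tail) :
    ∃ l₁ l₂, l = l₁ ++ p.1 :: p.2 :: l₂ := by
  induction l with
  | nil => simp at h
  | cons a l ih =>
    cases l with
    | nil => simp at h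
    | cons b l' =>
      rw [List.tail_cons, List.zip_cons_cons, List.mem_cons] at h
      rcases h with h | h
      · exact ⟨[], l', by subst h; simp⟩
      · obtain ⟨l₁, l₂, hl⟩ := ih h
        exact ⟨a :: l₁, l₂, by simp [hl]⟩

private lemma mem_zip_tail_cons {α : Type*} (c : α) {l : List α} {p : α × α}
    (h : p ∈ l.zip l.tail) : p ∈ (c :: l).zip (c :: l).tail := by
  cases l with
  | nil => simp at h
  | cons d l' =>
    rw [List.tail_cons, List.zip_cons_cons]
    exact List.mem_cons_of_mem _ h

private lemma exists_switch_pair (P Q : ℝ → Prop) (hPQ : ∀ t, P t → ¬ Q t) :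
    ∀ (l : List ℝ) (a : ℝ), P a → (∀ t ∈ l, P t ∨ Q t) →
      Q ((a :: l).getLast (by simp)) →
      ∃ u v, (u, v) ∈ (a :: l).zip ((a :: l).tail) ∧ P u ∧ Q v := by
  intro l
  induction l with
  | nil =>
    intro a hPa _ hQ
    simp only [List.getLast_singleton] at hQ
    exact absurd hQ (hPQ a hPa)
  | cons b l ih =>
    intro a hPa hl hQ
    rcases hl b (by simp) with hPb | hQb
    · obtain ⟨u, v, hm, hu, hv⟩ := ih b hPb (fun t ht => hl t (List.mem_cons_of_mem _ ht))
        (by rwa [List.getLast_cons (by simp)] at hQ)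
      exact ⟨u, v, mem_zip_tail_cons a hm, hu, hv⟩
    · exact ⟨a, b, by simp [List.zip_cons_cons], hPa, hQb⟩

private lemma sorted_le_getLast : ∀ {l : List ℝ}, l.Pairwise (· ≤ ·) → ∀ {x : ℝ}, x ∈ l →
    ∀ (hne : l ≠ []), x ≤ l.getLast hne := by
  intro l
  induction l with
  | nil => intro _ x hx; simp at hx
  | cons a l ih =>
    intro hs x hx hne
    rcases List.pairwise_cons.mp hs with ⟨ha, hs'⟩
    cases l with
    | nil =>
      simp only [List.mem_singleton] at hx
      simp [hx, List.getLast_singleton]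
    | cons b l' =>
      rw [List.getLast_cons (by simp)]
      rcases List.mem_cons.mp hx with rfl | hx2
      · exact le_trans (ha b (by simp)) (ih hs' (by simp) (by simp))
      · exact ih hs' hx2 (by simp)

/-- Let `L > 0` and let `S` be a finite subset of `[0, L]`.  The minimum of `x + (L − y)`
over all pairs `(x, y) ∈ [0, L] × [0, L]` such that every `s ∈ S` satisfies `s ≤ x` or
`y ≤ s`, exists and equals `L − G`, where `G` is the largest gap between consecutive
elements of the sorted list of `S ∪ {0, L}`. -/
theorem largest_gap_configuration (L : ℝ) (hL : 0 < L) (S : Finset ℝ)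
    (hS : ∀ s ∈ S, s ∈ Set.Icc (0 : ℝ) L) :
    IsLeast {z : ℝ | ∃ x y : ℝ, x ∈ Set.Icc (0 : ℝ) L ∧ y ∈ Set.Icc (0 : ℝ) L ∧
        (∀ s ∈ S, s ≤ x ∨ y ≤ s) ∧ z = x + (L - y)}
      (L - largestGap L S) := by
  obtain ⟨l, hl⟩ : ∃ l, l = sortedSegPoints L S := ⟨_, rfl⟩
  have hG : largestGap L S = ((l.zip l.tail).map (fun p => p.2 - p.1)).foldr max 0 := by
    rw [largestGap, hl]
  have hsort : l.Pairwise (· ≤ ·) := by rw [hl]; exact Finset.pairwise_sort _ _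
  have hmem : ∀ x : ℝ, x ∈ l ↔ (x = 0 ∨ x = L ∨ x ∈ S) := by
    intro x
    rw [hl, sortedSegPoints, Finset.mem_sort, Finset.mem_insert, Finset.mem_insert]
  have h0 : (0 : ℝ) ∈ l := (hmem 0).mpr (Or.inl rfl)
  have hLm : L ∈ l := (hmem L).mpr (Or.inr (Or.inl rfl))
  have hIcc : ∀ x ∈ l, x ∈ Set.Icc (0 : ℝ) L := by
    intro x hx
    rcases (hmem x).mp hx with rfl | rfl | hx
    · exact ⟨le_refl _, le_of_lt hL⟩
    · exact ⟨le_of_lt hL, le_refl _⟩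
    · exact hS x hx
  have hgaps_nonneg : ∀ d ∈ (l.zip l.tail).map (fun p => p.2 - p.1), 0 ≤ d := by
    intro d hd
    obtain ⟨p, hp, rfl⟩ := List.mem_map.mp hd
    obtain ⟨l₁, l₂, hleq⟩ := mem_zip_tail hp
    have hpw : List.Pairwise (· ≤ ·) (l₁ ++ p.1 :: p.2 :: l₂) := hleq ▸ hsort
    have h12 : p.1 ≤ p.2 :=
      (List.pairwise_cons.mp (List.pairwise_append.mp hpw).2.1).1 p.2 (by simp)
    linarith
  constructor
  · -- membership
    have hne : (l.zip l.tail).map (fun p => p.2 - p.1) ≠ [] := by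
      cases l with
      | nil => simp at h0
      | cons a t =>
        cases t with
        | nil =>
          simp only [List.mem_singleton] at h0 hLm
          exact absurd (h0.trans hLm.symm) hL.ne
        | cons b t' => simp [List.zip_cons_cons]
    have hGmem := foldr_max_mem _ hne hgaps_nonneg
    obtain ⟨p, hp, hpG⟩ := List.mem_map.mp hGmem
    obtain ⟨l₁, l₂, hleq⟩ := mem_zip_tail hp
    refine ⟨p.1, p.2, ?_, ?_, ?_, ?_⟩
    · exact hIcc p.1 (by rw [hleq]; simp)
    · exact hIcc p.2 (by rw [hleq]; simp)
    · intro s hs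
      have hsl : s ∈ l := (hmem s).mpr (Or.inr (Or.inr hs))
      rw [hleq] at hsl
      have hpw : List.Pairwise (· ≤ ·) (l₁ ++ p.1 :: p.2 :: l₂) := hleq ▸ hsort
      rw [List.pairwise_append] at hpw
      rcases List.mem_append.mp hsl with h1 | h2
      · exact Or.inl (hpw.2.2 s h1 p.1 (by simp))
      · rcases List.mem_cons.mp h2 with rfl | h2
        · exact Or.inl (le_refl _)
        · rcases List.mem_cons.mp h2 with rfl | h2
          · exact Or.inr (le_refl _)
          · have h3 := List.pairwise_cons.mp hpw.2.1
            have h4 := List.pairwise_cons.mp h3.2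
            exact Or.inr (h4.1 s h2)
    · rw [hG, ← hpG]; ring
  · -- lower bound
    rintro z ⟨x, y, hx, hy, hcov, rfl⟩
    rcases le_or_gt y x with hxy | hxy
    · have hGn : 0 ≤ largestGap L S := by rw [hG]; exact foldr_max_nonneg _
      linarith
    · have hP0 : (∀ t ∈ l, t ≤ x ∨ y ≤ t) := by
        intro t ht
        rcases (hmem t).mp ht with rfl | rfl | ht
        · exact Or.inl hx.1
        · exact Or.inr hy.2
        · exact hcov t ht
      obtain ⟨a, l', heq⟩ : ∃ a l', l = a :: l' := by
        cases hq : l with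
        | nil => rw [hq] at h0; simp at h0
        | cons a l' => exact ⟨a, l', rfl⟩
      subst heq
      have ha_le : a ≤ 0 := by
        rcases List.mem_cons.mp h0 with h | h
        · exact le_of_eq h.symm
        · exact (List.pairwise_cons.mp hsort).1 0 h
      have hlast : y ≤ (a :: l').getLast (by simp) := by
        have := sorted_le_getLast hsort hLm (by simp)
        linarith [hy.2]
      obtain ⟨u, v, hm, hu, hv⟩ := exists_switch_pair (fun t => t ≤ x) (fun t => y ≤ t)
        (fun t h1 h2 => by have h1' : t ≤ x := h1; have h2' : y ≤ t := h2; linarith) l' a (by show a ≤ x; linarith [hx.1])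
        (fun t ht => hP0 t (List.mem_cons_of_mem _ ht)) hlast
      have hu' : u ≤ x := hu
      have hv' : y ≤ v := hv
      have hvG : v - u ≤ largestGap L S := by
        rw [hG]
        exact le_foldr_max _ _ (List.mem_map.mpr ⟨(u, v), hm, rfl⟩)
      linarith
end

section
/- Let d be a real number and S a finite set of real numbers. Then the minimum, over all finite lists x₀, x₁, …, x_N of real numbers with x₀ = x_N = d whose set of entries contains S, of the total variation ∑_{r=0}^{N−1} |x_{r+1} − x_r|, exists and equals 2·(max(S ∪ {d}) − min(S ∪ {d})). In particular, every such list has total variation at least 2·(max(S ∪ {d}) − min(S ∪ {d})), and some such list attains this value. -/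
/-- The total variation `∑ r, |x_{r+1} − x_r|` of a list `x₀, x₁, …, x_N` of reals. -/
def listTotalVariation (l : List ℝ) : ℝ :=
  ((l.zip l.tail).map (fun p => |p.2 - p.1|)).sum

lemma tv_nil : listTotalVariation [] = 0 := rfl

lemma tv_single (x : ℝ) : listTotalVariation [x] = 0 := rfl

lemma tv_cons (x y : ℝ) (t : List ℝ) :
    listTotalVariation (x :: y :: t) = |y - x| + listTotalVariation (y :: t) := by
  simp [listTotalVariation]

lemma tv_cons' (x : ℝ) (t : List ℝ) (h : t ≠ []) :
    listTotalVariation (x :: t) = |t.head h - x| + listTotalVariation t := by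
  cases t with
  | nil => simp at h
  | cons y s => simp [tv_cons]

lemma tv_nonneg (l : List ℝ) : 0 ≤ listTotalVariation l := by
  apply List.sum_nonneg
  intro x hx
  rcases List.mem_map.mp hx with ⟨p, _, rfl⟩
  exact abs_nonneg _

lemma abs_last_sub_head_le (l : List ℝ) (h : l ≠ []) :
    |l.getLast h - l.head h| ≤ listTotalVariation l := by
  induction l with
  | nil => simp at h
  | cons x t ih =>
    cases t with
    | nil => simp [tv_single]
    | cons y s =>
      have h2 : (y :: s) ≠ [] := by simp
      have hle : |(y :: s).getLast h2 - y| ≤ listTotalVariation (y :: s) := by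
        simpa using ih h2
      have htri : |(y :: s).getLast h2 - x| ≤ |(y :: s).getLast h2 - y| + |y - x| := by
        have := abs_sub_le ((y :: s).getLast h2) y x
        simpa using this
      rw [tv_cons]
      have hlast : (x :: y :: s).getLast h = (y :: s).getLast h2 := by
        simp [List.getLast_cons]
      rw [hlast]
      simp only [List.head_cons]
      linarith

lemma tv_ge_via (l : List ℝ) (h : l ≠ []) (a : ℝ) (ha : a ∈ l) :
    |a - l.head h| + |l.getLast h - a| ≤ listTotalVariation l := by
  induction l with
  | nil => simp at h
  | cons x t ih =>
    cases t with
    | nil =>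
      have : a = x := by simpa using ha
      simp [this, tv_single]
    | cons y s =>
      have h2 : (y :: s) ≠ [] := by simp
      rw [tv_cons]
      have hlast : (x :: y :: s).getLast h = (y :: s).getLast h2 := by
        simp [List.getLast_cons]
      rw [hlast]
      simp only [List.head_cons]
      rcases List.mem_cons.mp ha with rfl | ha'
      · have hle : |(y :: s).getLast h2 - y| ≤ listTotalVariation (y :: s) := by
          simpa using abs_last_sub_head_le (y :: s) h2
        have htri : |(y :: s).getLast h2 - a| ≤ |(y :: s).getLast h2 - y| + |y - a| := by
          have := abs_sub_le ((y :: s).getLast h2) y a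
          simpa using this
        have : |y - a| = |a - y| := abs_sub_comm _ _
        simp only [sub_self, abs_zero]
        rw [abs_sub_comm y a] at htri
        linarith
      · have hle := ih h2 ha'
        simp only [List.head_cons] at hle
        have htri : |a - x| ≤ |a - y| + |y - x| := by
          have := abs_sub_le a y x
          simpa using this
        linarith

lemma tv_ge_two (l : List ℝ) (h : l ≠ []) (a b : ℝ) (ha : a ∈ l) (hb : b ∈ l) :
    |a - l.head h| + |b - a| + |l.getLast h - b| ≤ listTotalVariation l ∨
    |b - l.head h| + |a - b| + |l.getLast h - a| ≤ listTotalVariation l := by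
  induction l with
  | nil => simp at h
  | cons x t ih =>
    cases t with
    | nil =>
      have hax : a = x := by simpa using ha
      have hbx : b = x := by simpa using hb
      left; simp [hax, hbx, tv_single]
    | cons y s =>
      have h2 : (y :: s) ≠ [] := by simp
      have hlast : (x :: y :: s).getLast h = (y :: s).getLast h2 := by
        simp [List.getLast_cons]
      rcases List.mem_cons.mp ha with hax | ha'
      · -- a = x = head
        rcases List.mem_cons.mp hb with hbx | hb'
        · -- b = a = head
          left
          rw [hax, hbx]
          simpa using abs_last_sub_head_le (x :: y :: s) h
        · -- b in tail
          left
          rw [hax]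
          have := tv_ge_via (x :: y :: s) h b (by simp [hb'])
          simpa [add_assoc] using this
      · rcases List.mem_cons.mp hb with hbx | hb'
        · -- b = head, a in tail
          right
          rw [hbx]
          have := tv_ge_via (x :: y :: s) h a (by simp [ha'])
          simpa [add_assoc] using this
        · -- both in tail
          rw [tv_cons, hlast]
          simp only [List.head_cons]
          rcases ih h2 ha' hb' with hc | hc <;> simp only [List.head_cons] at hc
          · left
            have htri : |a - x| ≤ |a - y| + |y - x| := by
              have := abs_sub_le a y x; simpa using this
            linarith
          · right
            have htri : |b - x| ≤ |b - y| + |y - x| := by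
              have := abs_sub_le b y x; simpa using this
            linarith

lemma tv_append_singleton (l : List ℝ) (h : l ≠ []) (y : ℝ) :
    listTotalVariation (l ++ [y]) = listTotalVariation l + |y - l.getLast h| := by
  induction l with
  | nil => simp at h
  | cons x t ih =>
    cases t with
    | nil => simp [tv_cons, tv_single, tv_nil]
    | cons z s =>
      have h2 : (z :: s) ≠ [] := by simp
      have heq : (x :: z :: s) ++ [y] = x :: z :: (s ++ [y]) := rfl
      rw [heq, tv_cons]
      have heq2 : z :: (s ++ [y]) = (z :: s) ++ [y] := rfl
      rw [heq2, ih h2, tv_cons]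
      have hlast : (x :: z :: s).getLast h = (z :: s).getLast h2 := by
        simp [List.getLast_cons]
      rw [hlast]; ring

lemma tv_sorted (l : List ℝ) (h : l ≠ []) (hs : l.Pairwise (· ≤ ·)) :
    listTotalVariation l = l.getLast h - l.head h := by
  induction l with
  | nil => simp at h
  | cons x t ih =>
    cases t with
    | nil => simp [tv_single]
    | cons z s =>
      have h2 : (z :: s) ≠ [] := by simp
      rw [List.pairwise_cons] at hs
      have hxz : x ≤ z := hs.1 z (by simp)
      rw [tv_cons, ih h2 hs.2]
      have hlast : (x :: z :: s).getLast h = (z :: s).getLast h2 := by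
        simp [List.getLast_cons]
      rw [hlast, abs_of_nonneg (by linarith : (0:ℝ) ≤ z - x)]
      simp only [List.head_cons]
      ring

/-- Let `d` be a real number and `S` a finite set of reals.  The minimum, over all finite
lists `x₀, …, x_N` of reals with `x₀ = x_N = d` whose set of entries contains `S`, of the
total variation `∑ r, |x_{r+1} − x_r|`, exists and equals
`2 · (max (S ∪ {d}) − min (S ∪ {d}))`. -/
theorem single_aisle_tour_length (d : ℝ) (S : Finset ℝ) :
    IsLeast {z : ℝ | ∃ l : List ℝ, l ≠ [] ∧ l.head? = some d ∧ l.getLast? = some d ∧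
        (∀ s ∈ S, s ∈ l) ∧ z = listTotalVariation l}
      (2 * ((insert d S).max' (Finset.insert_nonempty d S) -
            (insert d S).min' (Finset.insert_nonempty d S))) := by
  set T := insert d S with hT
  have hTne : T.Nonempty := Finset.insert_nonempty d S
  set M := T.max' hTne with hM
  set m := T.min' hTne with hm
  have hdT : d ∈ T := Finset.mem_insert_self d S
  have hdM : d ≤ M := Finset.le_max' T d hdT
  have hmd : m ≤ d := Finset.min'_le T d hdT
  have hMT : M ∈ T := Finset.max'_mem T hTne
  have hmT : m ∈ T := Finset.min'_mem T hTne
  constructor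
  · -- lower bound is attained
    set L := T.sort (· ≤ ·) with hL
    have hlen : L.length = T.card := Finset.length_sort _
    have hLne : L ≠ [] := by
      intro hc
      rw [hc] at hlen
      simp at hlen
      exact hTne.ne_empty (Finset.card_eq_zero.mp hlen.symm)
    have hLsorted : L.Pairwise (· ≤ ·) := Finset.pairwise_sort _ _
    have hheadL : L.head hLne = m := by
      rw [List.head_eq_getElem_zero hLne]
      exact Finset.sorted_zero_eq_min'
    have hlastL : L.getLast hLne = M := by
      rw [List.getLast_eq_getElem]
      exact Finset.sorted_last_eq_max'
    refine ⟨d :: (L ++ [d]), by simp, by simp, ?_, ?_, ?_⟩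
    · have : d :: (L ++ [d]) = (d :: L) ++ [d] := by simp
      rw [this, List.getLast?_concat]
    · intro s hs
      have : s ∈ L := (Finset.mem_sort _).mpr (by rw [hT]; exact Finset.mem_insert_of_mem hs)
      simp [this]
    · have hLd : L ++ [d] ≠ [] := by simp
      have hhead2 : (L ++ [d]).head hLd = L.head hLne := List.head_append_of_ne_nil hLne
      rw [tv_cons' d (L ++ [d]) hLd, hhead2, tv_append_singleton L hLne d,
        tv_sorted L hLne hLsorted, hheadL, hlastL]
      rw [abs_of_nonpos (by linarith : m - d ≤ 0), abs_of_nonpos (by linarith : d - M ≤ 0)]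
      ring
  · -- lower bound
    rintro z ⟨l, hne, hhead, hlast, hmem, rfl⟩
    have hheadv : l.head hne = d := by
      have := List.head?_eq_head hne
      rw [hhead] at this
      exact (Option.some.inj this).symm
    have hlastv : l.getLast hne = d := by
      have := List.getLast?_eq_getLast hne
      rw [hlast] at this
      exact (Option.some.inj this).symm
    have hmem' : ∀ x ∈ T, x ∈ l := by
      intro x hx
      rcases Finset.mem_insert.mp hx with rfl | hx'
      · rw [← hheadv]; exact List.head_mem hne
      · exact hmem x hx'
    have hMl : M ∈ l := hmem' M hMT
    have hml : m ∈ l := hmem' m hmT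
    rcases tv_ge_two l hne M m hMl hml with hc | hc <;>
      rw [hheadv, hlastv] at hc
    · rw [abs_of_nonneg (by linarith : (0:ℝ) ≤ M - d),
        abs_of_nonpos (by linarith : m - M ≤ 0),
        abs_of_nonneg (by linarith : (0:ℝ) ≤ d - m)] at hc
      linarith
    · rw [abs_of_nonpos (by linarith : m - d ≤ 0),
        abs_of_nonneg (by linarith : (0:ℝ) ≤ M - m),
        abs_of_nonpos (by linarith : d - M ≤ 0)] at hc
      linarith
end

section
/- Fix a rectangular warehouse graph as defined in the context. For every tour subgraph c and every aisle index i with 1 ≤ i < m, the sum over j of the multiplicity that c assigns to the horizontal edge between v_{i,j} and v_{i+1,j} is even. -/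
structure Warehouse where
  m : ℕ
  n : ℕ
  hm : 1 ≤ m
  hn : 2 ≤ n
  w : ℝ
  h : ℝ
  hw : 0 < w
  hh : 0 < h
  items : Fin m → Fin (n - 1) → Finset ℝ
  items_mem : ∀ i j, ∀ t ∈ items i j,
    ((j : ℕ) : ℝ) * h < t ∧ t < (((j : ℕ) : ℝ) + 1) * h
  depot : Fin m × Fin n

namespace Warehouse

variable (W : Warehouse)

abbrev CrossV := Fin W.m × Fin W.n
abbrev ItemV := Σ i : Fin W.m, Σ j : Fin (W.n - 1), {t : ℝ // t ∈ W.items i j}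
abbrev Vertex := W.CrossV ⊕ W.ItemV
abbrev VEdge := Σ i : Fin W.m, Σ j : Fin (W.n - 1), Fin ((W.items i j).card + 1)
abbrev HEdge := Fin (W.m - 1) × Fin W.n
abbrev Edge := W.VEdge ⊕ W.HEdge

/-- The heights of the vertices of subaisle `j` of aisle `i`, sorted increasingly:
the two bounding cross-aisle heights `j·h` and `(j+1)·h` together with the item heights. -/
noncomputable def pts (i : Fin W.m) (j : Fin (W.n - 1)) : List ℝ :=
  (insert (((j : ℕ) : ℝ) * W.h) (insert ((((j : ℕ) : ℝ) + 1) * W.h) (W.items i j))).sort (· ≤ ·)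

/-- The height of the lower endpoint of a vertical edge. -/
noncomputable def lo (e : W.VEdge) : ℝ := (W.pts e.1 e.2.1).getD e.2.2 0

/-- The height of the upper endpoint of a vertical edge. -/
noncomputable def hi (e : W.VEdge) : ℝ := (W.pts e.1 e.2.1).getD (e.2.2 + 1) 0

/-- The vertex of subaisle `j` of aisle `i` located at height `t`. -/
noncomputable def vtxAt (i : Fin W.m) (j : Fin (W.n - 1)) (t : ℝ) : W.Vertex :=
  if ht : t ∈ W.items i j then Sum.inr ⟨i, j, t, ht⟩
  else if t = (((j : ℕ) : ℝ) + 1) * W.h then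
    Sum.inl (i, ⟨j.val + 1, by have := j.isLt; omega⟩)
  else Sum.inl (i, ⟨j.val, by have := j.isLt; omega⟩)

/-- The pair of endpoints of an edge. -/
noncomputable def ends : W.Edge → W.Vertex × W.Vertex
  | Sum.inl e => (W.vtxAt e.1 e.2.1 (W.lo e), W.vtxAt e.1 e.2.1 (W.hi e))
  | Sum.inr (a, j) =>
      (Sum.inl (⟨a.val, by have := a.isLt; omega⟩, j),
       Sum.inl (⟨a.val + 1, by have := a.isLt; omega⟩, j))

/-- The length of an edge. -/
noncomputable def len : W.Edge → ℝ
  | Sum.inl e => W.hi e - W.lo e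
  | Sum.inr _ => W.w

/-- The degree of a vertex with respect to an edge-multiplicity function `c`:
the sum of the multiplicities of the incident edges (counted twice for loops). -/
noncomputable def deg (c : W.Edge → ℕ) (v : W.Vertex) : ℕ :=
  ∑ e : W.Edge, c e *
    ((if (W.ends e).1 = v then 1 else 0) + (if (W.ends e).2 = v then 1 else 0))

/-- The vertices incident to an edge of positive multiplicity. -/
def support (c : W.Edge → ℕ) : Set W.Vertex :=
  {v | ∃ e : W.Edge, 0 < c e ∧ ((W.ends e).1 = v ∨ (W.ends e).2 = v)}

/-- The simple graph formed by the edges of positive multiplicity. -/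
noncomputable def supportGraph (c : W.Edge → ℕ) : SimpleGraph W.Vertex :=
  SimpleGraph.fromRel (fun u v => ∃ e : W.Edge, 0 < c e ∧ W.ends e = (u, v))

/-- The set `P` consisting of the depot together with all item vertices. -/
def Pset : Set W.Vertex :=
  insert (Sum.inl W.depot) (Set.range Sum.inr)

/-- A tour subgraph: an edge-multiplicity function such that the subgraph formed by the
edges of positive multiplicity contains every vertex of `P`, is connected, and every
vertex has even total degree. -/
def IsTourSubgraph (c : W.Edge → ℕ) : Prop :=
  W.Pset ⊆ W.support c ∧
  ((W.supportGraph c).induce (W.support c)).Connected ∧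
  ∀ v : W.Vertex, Even (W.deg c v)

/-- The total length of a tour subgraph. -/
noncomputable def tourLength (c : W.Edge → ℕ) : ℝ :=
  ∑ e : W.Edge, (c e : ℝ) * W.len e

/-- A minimal tour subgraph: a tour subgraph of minimum total length. -/
def IsMinimalTour (c : W.Edge → ℕ) : Prop :=
  W.IsTourSubgraph c ∧ ∀ c' : W.Edge → ℕ, W.IsTourSubgraph c' → W.tourLength c ≤ W.tourLength c'

/-- The aisle index of a vertex. -/
def aisleOf : W.Vertex → ℕ
  | Sum.inl p => p.1.val
  | Sum.inr s => s.1.val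

lemma aisleOf_vtxAt (i : Fin W.m) (j : Fin (W.n - 1)) (t : ℝ) :
    W.aisleOf (W.vtxAt i j t) = i.val := by
  unfold vtxAt
  split_ifs <;> rfl

end Warehouse

/-- For every tour subgraph `c` of a rectangular warehouse graph and every pair of adjacent
aisles `a, a+1`, the sum over the cross-aisles `j` of the multiplicities that `c` assigns to
the horizontal edges between `v_{a,j}` and `v_{a+1,j}` is even. -/
theorem warehouse_horizontal_cut_even (W : Warehouse) (c : W.Edge → ℕ)
    (hc : W.IsTourSubgraph c) (a : Fin (W.m - 1)) :
    Even (∑ j : Fin W.n, c (Sum.inr (a, j))) := by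
  classical
  set χ : W.Vertex → ZMod 2 := fun v => if W.aisleOf v ≤ a.val then 1 else 0 with hχ
  -- The sum of degrees over vertices in aisles ≤ a is 0 in ZMod 2.
  have h0 : ∑ v : W.Vertex, χ v * (W.deg c v : ZMod 2) = 0 := by
    apply Finset.sum_eq_zero
    intro v _
    obtain ⟨k, hk⟩ := hc.2.2 v
    rw [hk]
    push_cast
    ring_nf
    rw [show ((2 : ZMod 2) = 0) from rfl]
    ring
  -- Rewrite the degree sum as a sum over edges.
  have h1 : ∑ v : W.Vertex, χ v * (W.deg c v : ZMod 2)
      = ∑ e : W.Edge, (c e : ZMod 2) * (χ (W.ends e).1 + χ (W.ends e).2) := by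
    unfold Warehouse.deg
    push_cast
    simp only [Finset.mul_sum]
    rw [Finset.sum_comm]
    refine Finset.sum_congr rfl fun e _ => ?_
    have e1 : ∑ v : W.Vertex, χ v * ((c e : ZMod 2) *
        ((if (W.ends e).1 = v then 1 else 0) + (if (W.ends e).2 = v then 1 else 0)))
        = (c e : ZMod 2) * (χ (W.ends e).1 + χ (W.ends e).2) := by
      simp only [mul_add, Finset.sum_add_distrib]
      congr 1
      · rw [Finset.sum_congr rfl (fun v _ =>
          show χ v * ((c e : ZMod 2) * if (W.ends e).1 = v then 1 else 0)
            = if (W.ends e).1 = v then χ v * (c e : ZMod 2) else 0 by split_ifs <;> ring),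
          Finset.sum_ite_eq]
        simp [mul_comm]
      · rw [Finset.sum_congr rfl (fun v _ =>
          show χ v * ((c e : ZMod 2) * if (W.ends e).2 = v then 1 else 0)
            = if (W.ends e).2 = v then χ v * (c e : ZMod 2) else 0 by split_ifs <;> ring),
          Finset.sum_ite_eq]
        simp [mul_comm]
    exact e1
  -- Compute the edge sum.
  have h2 : ∑ e : W.Edge, (c e : ZMod 2) * (χ (W.ends e).1 + χ (W.ends e).2)
      = ((∑ j : Fin W.n, c (Sum.inr (a, j)) : ℕ) : ZMod 2) := by
    rw [Fintype.sum_sum_type]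
    have hvert : ∑ e : W.VEdge,
        (c (Sum.inl e) : ZMod 2) * (χ (W.ends (Sum.inl e)).1 + χ (W.ends (Sum.inl e)).2) = 0 := by
      apply Finset.sum_eq_zero
      intro e _
      have hends : (W.ends (Sum.inl e)).1 = W.vtxAt e.1 e.2.1 (W.lo e) ∧
          (W.ends (Sum.inl e)).2 = W.vtxAt e.1 e.2.1 (W.hi e) := ⟨rfl, rfl⟩
      have hχeq : χ (W.ends (Sum.inl e)).1 = χ (W.ends (Sum.inl e)).2 := by
        rw [hends.1, hends.2, hχ]
        simp only [W.aisleOf_vtxAt]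
      rw [hχeq]
      rw [show χ (W.ends (Sum.inl e)).2 + χ (W.ends (Sum.inl e)).2
          = 2 * χ (W.ends (Sum.inl e)).2 by ring,
        show ((2 : ZMod 2) = 0) from rfl]
      ring
    rw [hvert, zero_add]
    have hhor : ∀ p : W.HEdge,
        (c (Sum.inr p) : ZMod 2) * (χ (W.ends (Sum.inr p)).1 + χ (W.ends (Sum.inr p)).2)
        = if p.1 = a then (c (Sum.inr p) : ZMod 2) else 0 := by
      rintro ⟨b, j⟩
      have hends : χ (W.ends (Sum.inr (b, j))).1 + χ (W.ends (Sum.inr (b, j))).2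
          = (if b.val ≤ a.val then 1 else 0) + (if b.val + 1 ≤ a.val then 1 else 0) := by
        rfl
      rw [hends]
      by_cases hba : b = a
      · subst hba
        rw [if_pos le_rfl, if_neg (by omega), if_pos rfl]
        ring
      · rw [if_neg hba]
        have hne : b.val ≠ a.val := fun h => hba (Fin.ext h)
        rcases lt_or_gt_of_ne hne with h | h
        · rw [if_pos h.le, if_pos (by omega),
            show ((1 : ZMod 2) + 1 = 0) from rfl]
          ring
        · rw [if_neg (by omega), if_neg (by omega)]
          ring
    simp only [hhor]
    rw [Fintype.sum_prod_type]
    push_cast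
    rw [Finset.sum_comm]
    refine Finset.sum_congr rfl fun j _ => ?_
    rw [Finset.sum_ite_eq' Finset.univ a (fun b => (c (Sum.inr (b, j)) : ZMod 2))]
    simp
  rw [← ZMod.natCast_eq_zero_iff_even, ← h2, ← h1, h0]
end
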